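/- Let ℓ = {i, j, i*j} be a Fano line with i ≺ j (meaning eᵢeⱼ = e_{i*j}) and k ∉ ℓ. Then the Lie bracket of derivations satisfies [E_i^{ℓ,k}, E_j^{ℓ,k}] = E_{i*j}^{ℓ,k} and [F_i^ℓ, F_j^ℓ] = F_{i*j}^ℓ. -/

import Mathlib

noncomputable section

/-- Offset function for the octonion multiplication table: for distinct indices
`i, j` (in `ZMod 7`) with `d = j - i`, `eᵢ eⱼ = ± e_{i + octOff d}`.
It encodes the rules `eᵢe_{i+1} = e_{i+3}`, `e_{i+1}e_{i+3} = eᵢ`,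
`e_{i+3}eᵢ = e_{i+1}` (indices modulo 7). -/
def octOff : ZMod 7 → ZMod 7 := fun d =>
  if d = 1 then 3 else if d = 2 then 6 else if d = 3 then 1
  else if d = 4 then 5 else if d = 5 then 4 else if d = 6 then 2 else 0

/-- Sign in `eᵢ eⱼ = octSgn (j - i) • e_{i*j}` for distinct `i, j`. -/
def octSgn : ZMod 7 → ℝ := fun d => if d = 1 ∨ d = 2 ∨ d = 4 then 1 else -1

/-- The real octonion division algebra: a scalar part and seven imaginary
coordinates (indexed by `ZMod 7`; index `i` stands for the unit `eᵢ`,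
with `e₀ = e₇`). -/
def Oct : Type := ℝ × (ZMod 7 → ℝ)

instance : AddCommGroup Oct := inferInstanceAs (AddCommGroup (ℝ × (ZMod 7 → ℝ)))
instance : Module ℝ Oct := inferInstanceAs (Module ℝ (ℝ × (ZMod 7 → ℝ)))

/-- View an octonion as a pair. -/
def oc (x : Oct) : ℝ × (ZMod 7 → ℝ) := x
/-- Build an octonion from a pair. -/
def om (p : ℝ × (ZMod 7 → ℝ)) : Oct := p

/-- The octonion multiplication: `e₀ = 1` is the unit, `eᵢ² = -1` and
`eᵢe_{i+1} = e_{i+3} = -e_{i+1}eᵢ` for the imaginary units (indices mod 7). -/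
instance : Mul Oct :=
  ⟨fun x y => om
    ((oc x).1 * (oc y).1 - ∑ i : ZMod 7, (oc x).2 i * (oc y).2 i,
     fun k => (oc x).1 * (oc y).2 k + (oc y).1 * (oc x).2 k +
       ∑ i : ZMod 7, ∑ j : ZMod 7,
         (if i ≠ j ∧ k = i + octOff (j - i) then octSgn (j - i) else 0)
           * (oc x).2 i * (oc y).2 j)⟩

instance : One Oct := ⟨om (1, 0)⟩

/-- The imaginary basis units `eᵢ`, `i ∈ ZMod 7` (`e₀ = e₇`). -/
def e (i : ZMod 7) : Oct := om (0, Pi.single i 1)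

/-- For distinct `i, j`, `idx i j = i*j` is the index with `gᵢ + gⱼ = g_{i*j}`,
i.e. `eᵢeⱼ = ± e_{idx i j}`. -/
def idx (i j : ZMod 7) : ZMod 7 := i + octOff (j - i)

/-- A linear endomorphism of the octonions is a derivation. -/
def IsOctDer (d : Oct →ₗ[ℝ] Oct) : Prop := ∀ x y : Oct, d (x * y) = d x * y + x * d y

/-- The quaternion subalgebra `Q_ℓ = ⟨1, eᵢ, eⱼ, e_{i*j}⟩` attached to the
Fano line `ℓ = {i, j, i*j}`. -/
def Qline (i j : ZMod 7) : Submodule ℝ Oct :=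
  Submodule.span ℝ ({1, e i, e j, e (idx i j)} : Set Oct)

/-- `isE i k Q E` says that `E = E_i^{ℓ,k}` : `E(q) = 0` and
`E(q·e_k) = (1/2)(eᵢq)e_k` for all `q ∈ Q = Q_ℓ`. -/
def isE (i k : ZMod 7) (Q : Submodule ℝ Oct) (E : Oct →ₗ[ℝ] Oct) : Prop :=
  ∀ q ∈ Q, E q = 0 ∧ E (q * e k) = (1/2 : ℝ) • ((e i * q) * e k)

/-- `isF i k Q F` says that `F = F_i^{ℓ,k}` : `F(q) = (1/2)[eᵢ, q]` and
`F(q·e_k) = −(1/2)(q·eᵢ)e_k` for all `q ∈ Q = Q_ℓ`. -/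
def isF (i k : ZMod 7) (Q : Submodule ℝ Oct) (F : Oct →ₗ[ℝ] Oct) : Prop :=
  ∀ q ∈ Q, F q = (1/2 : ℝ) • (e i * q - q * e i) ∧
    F (q * e k) = -((1/2 : ℝ) • ((q * e i) * e k))

end

noncomputable section
namespace OctAux

@[simp] lemma one_fst : (1 : Oct).1 = 1 := rfl
@[simp] lemma one_snd (t : ZMod 7) : (1 : Oct).2 t = 0 := rfl
@[simp] lemma smul_fst (c : ℝ) (x : Oct) : (c • x).1 = c * x.1 := rfl
@[simp] lemma smul_snd (c : ℝ) (x : Oct) (t : ZMod 7) : (c • x).2 t = c * x.2 t := rfl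
@[simp] lemma neg_fst (x : Oct) : (-x).1 = -x.1 := rfl
@[simp] lemma neg_snd (x : Oct) (t : ZMod 7) : (-x).2 t = -x.2 t := rfl
@[simp] lemma add_fst (x y : Oct) : (x + y).1 = x.1 + y.1 := rfl
@[simp] lemma add_snd (x y : Oct) (t : ZMod 7) : (x + y).2 t = x.2 t + y.2 t := rfl
@[simp] lemma e_fst (a : ZMod 7) : (e a).1 = 0 := rfl
@[simp] lemma e_snd (a t : ZMod 7) : (e a).2 t = if t = a then 1 else 0 := by
  show Pi.single a 1 t = _; simp [Pi.single_apply]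
@[simp] lemma mul_fst (x y : Oct) :
    (x * y).1 = x.1 * y.1 - ∑ i : ZMod 7, x.2 i * y.2 i := rfl
@[simp] lemma mul_snd (x y : Oct) (t : ZMod 7) :
    (x * y).2 t = x.1 * y.2 t + y.1 * x.2 t +
       ∑ i : ZMod 7, ∑ j : ZMod 7,
         (if i ≠ j ∧ t = i + octOff (j - i) then octSgn (j - i) else 0)
           * x.2 i * y.2 j := rfl

lemma oext {x y : Oct} (h1 : x.1 = y.1) (h2 : ∀ t, x.2 t = y.2 t) : x = y :=
  Prod.ext h1 (funext h2)

lemma oct_one_mul (x : Oct) : 1 * x = x := by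
  refine oext ?_ fun t => ?_ <;> simp

lemma oct_mul_one (x : Oct) : x * 1 = x := by
  refine oext ?_ fun t => ?_ <;> simp

lemma oct_smul_mul (c : ℝ) (x y : Oct) : (c • x) * y = c • (x * y) := by
  refine oext ?_ fun t => ?_
  · simp only [mul_fst, smul_fst, smul_snd]
    rw [mul_sub, Finset.mul_sum]
    congr 1
    · ring
    · exact Finset.sum_congr rfl fun a _ => by ring
  · simp only [mul_snd, smul_fst, smul_snd]
    rw [mul_add, mul_add, Finset.mul_sum]
    congr 1
    · congr 1 <;> ring
    · refine Finset.sum_congr rfl fun a _ => ?_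
      rw [Finset.mul_sum]
      refine Finset.sum_congr rfl fun b _ => ?_
      split <;> ring

lemma e_mul_e {a b : ZMod 7} (h : a ≠ b) : e a * e b = octSgn (b - a) • e (idx a b) := by
  refine oext ?_ fun t => ?_
  · simp [Finset.sum_ite_eq, Ne.symm h]
  · simp only [mul_snd, e_snd, smul_snd, e_fst, mul_ite, ite_and, mul_zero, zero_mul, mul_one,
      zero_add, idx]
    rw [Finset.sum_eq_single a]
    · rw [Finset.sum_eq_single b]
      · simp [h]
      · intro c _ hc; simp [hc, Ne.symm hc]
      · simp
    · intro c _ hc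
      rw [Finset.sum_eq_single b] <;> simp +contextual [hc, Ne.symm hc]
    · simp

lemma e_mul_self (a : ZMod 7) : e a * e a = -1 := by
  refine oext ?_ fun t => ?_
  · simp [Finset.sum_ite_eq]
  · simp only [mul_snd, e_snd, mul_ite, ite_and, mul_zero, zero_mul, mul_one, zero_add, neg_snd,
      one_snd, neg_zero]
    rw [Finset.sum_eq_single a] <;> simp +contextual

end OctAux
end

noncomputable section
namespace OctAux

lemma octSgn_pos {d : ZMod 7} (h : d = 1 ∨ d = 2 ∨ d = 4) : octSgn d = 1 := by
  unfold octSgn; rw [if_pos h]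

lemma octSgn_neg {d : ZMod 7} (h : ¬(d = 1 ∨ d = 2 ∨ d = 4)) : octSgn d = -1 := by
  unfold octSgn; rw [if_neg h]

lemma facts (i j : ZMod 7) (h : j - i = 1 ∨ j - i = 2 ∨ j - i = 4) :
    (idx i j - j = 1 ∨ idx i j - j = 2 ∨ idx i j - j = 4) ∧
    (i - idx i j = 1 ∨ i - idx i j = 2 ∨ i - idx i j = 4) ∧
    ¬(i - j = 1 ∨ i - j = 2 ∨ i - j = 4) ∧
    ¬(j - idx i j = 1 ∨ j - idx i j = 2 ∨ j - idx i j = 4) ∧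
    ¬(idx i j - i = 1 ∨ idx i j - i = 2 ∨ idx i j - i = 4) ∧
    idx i j = idx j i ∧ idx j (idx i j) = i ∧ idx (idx i j) j = i ∧
    idx (idx i j) i = j ∧ idx i (idx i j) = j ∧
    i ≠ j ∧ j ≠ idx i j ∧ i ≠ idx i j := by
  revert h; revert i j; decide

lemma cover (i j k t : ZMod 7) (h : j - i = 1 ∨ j - i = 2 ∨ j - i = 4)
    (h1 : k ≠ i) (h2 : k ≠ j) (h3 : k ≠ idx i j) :
    t = i ∨ t = j ∨ t = idx i j ∨ t = k ∨ t = idx i k ∨ t = idx j k ∨ t = idx (idx i j) k := by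
  revert h h1 h2 h3; revert i j k t; decide

end OctAux
end

noncomputable section
namespace OctAux

lemma fst_sum {α : Type*} (s : Finset α) (f : α → Oct) :
    (∑ a ∈ s, f a).1 = ∑ a ∈ s, (f a).1 := by
  classical
  induction s using Finset.induction with
  | empty => rfl
  | insert _ _ h ih => rw [Finset.sum_insert h, Finset.sum_insert h, add_fst, ih]

lemma snd_sum {α : Type*} (s : Finset α) (f : α → Oct) (t : ZMod 7) :
    (∑ a ∈ s, f a).2 t = ∑ a ∈ s, (f a).2 t := by
  classical
  induction s using Finset.induction with
  | empty => rfl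
  | insert _ _ h ih => rw [Finset.sum_insert h, Finset.sum_insert h, add_snd, ih]

lemma decomp (x : Oct) : x = x.1 • (1 : Oct) + ∑ t : ZMod 7, x.2 t • e t := by
  refine oext ?_ fun u => ?_ <;>
    simp [fst_sum, snd_sum, mul_ite, Finset.sum_ite_eq]

lemma mem_of_mul {a k : ZMod 7} (h : a ≠ k) {S : Submodule ℝ Oct}
    (hm : e a * e k ∈ S) : e (idx a k) ∈ S := by
  have he := e_mul_e h
  by_cases hp : (k - a = 1 ∨ k - a = 2 ∨ k - a = 4)
  · rw [octSgn_pos hp, one_smul] at he; rw [← he]; exact hm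
  · rw [octSgn_neg hp, neg_one_smul] at he
    have h2 : e (idx a k) = -(e a * e k) := by rw [he, neg_neg]
    rw [h2]; exact neg_mem hm

lemma span_top (i j k : ZMod 7) (h : j - i = 1 ∨ j - i = 2 ∨ j - i = 4)
    (h1 : k ≠ i) (h2 : k ≠ j) (h3 : k ≠ idx i j) :
    Submodule.span ℝ ({1, e i, e j, e (idx i j), e k,
      e i * e k, e j * e k, e (idx i j) * e k} : Set Oct) = ⊤ := by
  rw [eq_top_iff]
  rintro x -
  rw [decomp x]
  refine add_mem (Submodule.smul_mem _ _ (Submodule.subset_span (by simp)))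
    (Submodule.sum_mem _ fun t _ => Submodule.smul_mem _ _ ?_)
  rcases cover i j k t h h1 h2 h3 with rfl | rfl | rfl | rfl | rfl | rfl | rfl
  · exact Submodule.subset_span (by simp)
  · exact Submodule.subset_span (by simp)
  · exact Submodule.subset_span (by simp)
  · exact Submodule.subset_span (by simp)
  · exact mem_of_mul (Ne.symm h1) (Submodule.subset_span (by simp))
  · exact mem_of_mul (Ne.symm h2) (Submodule.subset_span (by simp))
  · exact mem_of_mul (Ne.symm h3) (Submodule.subset_span (by simp))

end OctAux
end

noncomputable section
namespace OctAux

lemma oct_neg_mul (x y : Oct) : (-x) * y = -(x * y) := by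
  have h : (-x) = (-1 : ℝ) • x := by refine oext ?_ fun t => ?_ <;> simp
  rw [h, oct_smul_mul, neg_one_smul]

end OctAux
end



open OctAux

/-- for a Fano line `ℓ = {i, j, i*j}` with `i ≺ j`
(i.e. `eᵢeⱼ = e_{i*j}`) and `k ∉ ℓ`, the brackets of the derivations satisfy
`[E_i^{ℓ,k}, E_j^{ℓ,k}] = E_{i*j}^{ℓ,k}` and `[F_i^ℓ, F_j^ℓ] = F_{i*j}^ℓ`. -/
theorem stmt9 : ∀ i j k : ZMod 7, i ≠ j → e i * e j = e (idx i j) →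
    k ∉ ({i, j, idx i j} : Set (ZMod 7)) →
    ∀ Ei Ej Eij Fi Fj Fij : Oct →ₗ[ℝ] Oct,
      isE i k (Qline i j) Ei → isE j k (Qline i j) Ej →
      isE (idx i j) k (Qline i j) Eij →
      isF i k (Qline i j) Fi → isF j k (Qline i j) Fj →
      isF (idx i j) k (Qline i j) Fij →
      Ei ∘ₗ Ej - Ej ∘ₗ Ei = Eij ∧ Fi ∘ₗ Fj - Fj ∘ₗ Fi = Fij := by
  intro i j k hij hmul hk Ei Ej Eij Fi Fj Fij hEi hEj hEij hFi hFj hFij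
  simp only [Set.mem_insert_iff, Set.mem_singleton_iff, not_or] at hk
  obtain ⟨hk1, hk2, hk3⟩ := hk
  have hd : j - i = 1 ∨ j - i = 2 ∨ j - i = 4 := by
    by_contra hcon
    have h1 := e_mul_e hij
    rw [hmul, octSgn_neg hcon, neg_one_smul] at h1
    have h2 := congrArg (fun z : Oct => z.2 (idx i j)) h1
    simp at h2
    norm_num at h2
  obtain ⟨f1, f2, f3, f4, f5, f6, f7, f8, f9, f10, -, f12, f13⟩ := facts i j hd
  have pji : e j * e i = -(e (idx i j)) := by
    rw [e_mul_e (Ne.symm hij), octSgn_neg f3, ← f6, neg_one_smul]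
  have pjm : e j * e (idx i j) = e i := by
    rw [e_mul_e f12, octSgn_pos f1, f7, one_smul]
  have pmj : e (idx i j) * e j = -(e i) := by
    rw [e_mul_e (Ne.symm f12), octSgn_neg f4, f8, neg_one_smul]
  have pmi : e (idx i j) * e i = e j := by
    rw [e_mul_e (Ne.symm f13), octSgn_pos f2, f9, one_smul]
  have pim : e i * e (idx i j) = -(e j) := by
    rw [e_mul_e f13, octSgn_neg f5, f10, neg_one_smul]
  have m1 : (1 : Oct) ∈ Qline i j := Submodule.subset_span (by simp)
  have mi : e i ∈ Qline i j := Submodule.subset_span (by simp)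
  have mj : e j ∈ Qline i j := Submodule.subset_span (by simp)
  have mm : e (idx i j) ∈ Qline i j := Submodule.subset_span (by simp)
  -- E values on the quaternion part
  have Ei1 := (hEi 1 m1).1
  have Eii := (hEi (e i) mi).1
  have Eij' := (hEi (e j) mj).1
  have Eim := (hEi (e (idx i j)) mm).1
  have Ej1 := (hEj 1 m1).1
  have Eji := (hEj (e i) mi).1
  have Ejj := (hEj (e j) mj).1
  have Ejm := (hEj (e (idx i j)) mm).1
  have Em1 := (hEij 1 m1).1
  have Emi := (hEij (e i) mi).1
  have Emj := (hEij (e j) mj).1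
  have Emm := (hEij (e (idx i j)) mm).1
  -- E values on the e k part
  have Eik := (hEi 1 m1).2
  rw [oct_one_mul, oct_mul_one] at Eik
  have Eiik := (hEi (e i) mi).2
  have Eijk := (hEi (e j) mj).2
  have Eimk := (hEi (e (idx i j)) mm).2
  have Ejk := (hEj 1 m1).2
  rw [oct_one_mul, oct_mul_one] at Ejk
  have Ejik := (hEj (e i) mi).2
  have Ejjk := (hEj (e j) mj).2
  have Ejmk := (hEj (e (idx i j)) mm).2
  have Emk := (hEij 1 m1).2
  rw [oct_one_mul, oct_mul_one] at Emk
  have Emik := (hEij (e i) mi).2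
  have Emjk := (hEij (e j) mj).2
  have Emmk := (hEij (e (idx i j)) mm).2
  -- F values
  have Fi1 := (hFi 1 m1).1
  have Fii := (hFi (e i) mi).1
  have Fij' := (hFi (e j) mj).1
  have Fim := (hFi (e (idx i j)) mm).1
  have Fj1 := (hFj 1 m1).1
  have Fji := (hFj (e i) mi).1
  have Fjj := (hFj (e j) mj).1
  have Fjm := (hFj (e (idx i j)) mm).1
  have Fm1 := (hFij 1 m1).1
  have Fmi := (hFij (e i) mi).1
  have Fmj := (hFij (e j) mj).1
  have Fmm := (hFij (e (idx i j)) mm).1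
  have Fik := (hFi 1 m1).2
  rw [oct_one_mul, oct_one_mul] at Fik
  have Fiik := (hFi (e i) mi).2
  have Fijk := (hFi (e j) mj).2
  have Fimk := (hFi (e (idx i j)) mm).2
  have Fjk := (hFj 1 m1).2
  rw [oct_one_mul, oct_one_mul] at Fjk
  have Fjik := (hFj (e i) mi).2
  have Fjjk := (hFj (e j) mj).2
  have Fjmk := (hFj (e (idx i j)) mm).2
  have Fmk := (hFij 1 m1).2
  rw [oct_one_mul, oct_one_mul] at Fmk
  have Fmik := (hFij (e i) mi).2
  have Fmjk := (hFij (e j) mj).2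
  have Fmmk := (hFij (e (idx i j)) mm).2
  have hspan := span_top i j k hd hk1 hk2 hk3
  constructor
  · refine LinearMap.ext_on hspan fun x hx => ?_
    simp only [Set.mem_insert_iff, Set.mem_singleton_iff] at hx
    rcases hx with rfl | rfl | rfl | rfl | rfl | rfl | rfl | rfl <;>
      simp only [LinearMap.sub_apply, LinearMap.comp_apply,
        Ei1, Eii, Eij', Eim, Ej1, Eji, Ejj, Ejm, Em1, Emi, Emj, Emm,
        Eik, Eiik, Eijk, Eimk, Ejk, Ejik, Ejjk, Ejmk, Emk, Emik, Emjk, Emmk,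
        hmul, pji, pjm, pmj, pmi, pim, e_mul_self,
        oct_neg_mul, oct_one_mul, oct_mul_one, oct_smul_mul,
        map_smul, map_neg, map_zero, smul_neg, sub_zero, zero_sub, smul_zero,
        neg_neg, sub_self, neg_zero] <;>
      module
  · refine LinearMap.ext_on hspan fun x hx => ?_
    simp only [Set.mem_insert_iff, Set.mem_singleton_iff] at hx
    rcases hx with rfl | rfl | rfl | rfl | rfl | rfl | rfl | rfl <;>
      simp only [LinearMap.sub_apply, LinearMap.comp_apply,
        Fi1, Fii, Fij', Fim, Fj1, Fji, Fjj, Fjm, Fm1, Fmi, Fmj, Fmm,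
        Fik, Fiik, Fijk, Fimk, Fjk, Fjik, Fjjk, Fjmk, Fmk, Fmik, Fmjk, Fmmk,
        hmul, pji, pjm, pmj, pmi, pim, e_mul_self,
        oct_neg_mul, oct_one_mul, oct_mul_one, oct_smul_mul,
        map_smul, map_neg, map_zero, map_sub, map_add, smul_neg, smul_sub, sub_zero, zero_sub,
        smul_zero, neg_neg, sub_self, neg_zero, sub_neg_eq_add] <;>
      module
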